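/- arXiv:1912.12221 — 2 statements merged into one kernel-verified Lean document; each statement's English description precedes it below -/
import Mathlib

section
/- Let $(\Omega,\mathcal{F},\mathbb{P})$ be a probability space, $H$ a nonempty finite index set, and $F : H \to \mathbb{R}$ a fixed vector. Let $(g_j)_{j \in H}$ be real-valued random variables on $\Omega$ such that each $g_j$ takes values in $\{-1,1\}$ with $\mathbb{P}(g_j = 1) = \mathbb{P}(g_j = -1) = 1/2$, and such that the family $(g_j)_{j\in H}$ is $4$-wise independent, i.e. for every subset $S \subseteq H$ with $|S| \le 4$ the variables $(g_j)_{j \in S}$ are mutually independent. Define $X = \sum_{j\in H} F(j)\, g_j$, $F_2 = \sum_{j\in H} F(j)^2$, and $F_4 = \sum_{j\in H} F(j)^4$. Then $\mathbb{E}[X^4] = 3 F_2^2 - 2 F_4$. -/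
open MeasureTheory ProbabilityTheory

/-- **Fourth moment of the AMS sketch.** If `(g j)` are 4-wise independent Rademacher
random variables and `X = ∑ j, F j * g j`, then `E[X⁴] = 3 F₂² - 2 F₄` where
`F₂ = ∑ j, F j ^ 2` and `F₄ = ∑ j, F j ^ 4`. -/
theorem ams_sketch_fourth_moment
    {Ω : Type*} [MeasurableSpace Ω] (μ : Measure Ω) [IsProbabilityMeasure μ]
    {H : Type*} [Fintype H] [Nonempty H] (F : H → ℝ) (g : H → Ω → ℝ)
    (hmeas : ∀ j, Measurable (g j))
    (hval : ∀ j ω, g j ω = 1 ∨ g j ω = -1)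
    (hp1 : ∀ j, μ {ω | g j ω = 1} = 1 / 2)
    (hpm1 : ∀ j, μ {ω | g j ω = -1} = 1 / 2)
    (hindep : ∀ S : Finset H, S.card ≤ 4 →
      iIndepFun
        (fun j : S => g (j : H)) μ) :
    ∫ ω, (∑ j, F j * g j ω) ^ 4 ∂μ =
      3 * (∑ j, (F j) ^ 2) ^ 2 - 2 * ∑ j, (F j) ^ 4 := by
  classical
  -- basic facts
  have hsq : ∀ j ω, g j ω * g j ω = 1 := fun j ω => by
    rcases hval j ω with h | h <;> rw [h] <;> norm_num
  have habs : ∀ j ω, |g j ω| = 1 := fun j ω => by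
    rcases hval j ω with h | h <;> rw [h] <;> norm_num
  have hbd : ∀ (f : Ω → ℝ), Measurable f → (∀ ω, |f ω| ≤ 1) → Integrable f μ := by
    intro f hf hfb
    exact (integrable_const (1:ℝ)).mono' hf.aestronglyMeasurable
      (Filter.Eventually.of_forall fun ω => by simpa using hfb ω)
  have hint1 : ∀ j, Integrable (g j) μ := fun j =>
    hbd _ (hmeas j) (fun ω => (habs j ω).le)
  have hint2 : ∀ a b, Integrable (fun ω => g a ω * g b ω) μ := fun a b =>
    hbd _ ((hmeas a).mul (hmeas b)) (fun ω => by rw [abs_mul, habs, habs]; norm_num)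
  have hint3 : ∀ a b c, Integrable (fun ω => g a ω * g b ω * g c ω) μ := fun a b c =>
    hbd _ (((hmeas a).mul (hmeas b)).mul (hmeas c))
      (fun ω => by rw [abs_mul, abs_mul, habs, habs, habs]; norm_num)
  have hint4 : ∀ a b c d, Integrable (fun ω => g a ω * g b ω * g c ω * g d ω) μ :=
    fun a b c d =>
    hbd _ ((((hmeas a).mul (hmeas b)).mul (hmeas c)).mul (hmeas d))
      (fun ω => by rw [abs_mul, abs_mul, abs_mul, habs, habs, habs, habs]; norm_num)
  -- expectation of a single g is zero
  have hEg : ∀ j, ∫ ω, g j ω ∂μ = 0 := by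
    intro j
    have hA : MeasurableSet {ω | g j ω = 1} := hmeas j (measurableSet_singleton 1)
    have hfun : (fun ω => g j ω) =
        fun ω => Set.indicator {ω | g j ω = 1} (fun _ => (2:ℝ)) ω - 1 := by
      funext ω; by_cases h : g j ω = 1
      · norm_num [Set.indicator, h]
      · have h' : g j ω = -1 := (hval j ω).resolve_left h
        norm_num [Set.indicator, h, h']
    rw [hfun, integral_sub ((integrable_const (2:ℝ)).indicator hA) (integrable_const 1),
      integral_indicator_const _ hA, integral_const]
    simp [measureReal_def, hp1 j]
  -- expectation of a product of two distinct g's is zero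
  have hE2 : ∀ a b, a ≠ b → ∫ ω, g a ω * g b ω ∂μ = 0 := by
    intro a b hab
    have hc : ({a, b} : Finset H).card ≤ 4 :=
      le_trans (Finset.card_insert_le _ _) (by simp)
    have hI : IndepFun (g a) (g b) μ :=
      (hindep {a, b} hc).indepFun (i := ⟨a, by simp⟩) (j := ⟨b, by simp⟩)
        (by simp [Subtype.ext_iff, hab])
    have := hI.integral_mul_eq_mul_integral (hint1 a).aestronglyMeasurable (hint1 b).aestronglyMeasurable
    calc ∫ ω, g a ω * g b ω ∂μ = ∫ ω, (g a * g b) ω ∂μ := rfl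
      _ = (∫ ω, g a ω ∂μ) * ∫ ω, g b ω ∂μ := this
      _ = 0 := by rw [hEg a]; ring
  -- expectation of a product of four distinct g's is zero
  have hE4 : ∀ a b c d, a ≠ b → a ≠ c → a ≠ d → b ≠ c → b ≠ d → c ≠ d →
      ∫ ω, g a ω * g b ω * g c ω * g d ω ∂μ = 0 := by
    intro a b c d hab hac had hbc hbd hcd
    set S : Finset H := {a, b, c, d} with hS
    have hc4 : S.card ≤ 4 := by
      refine le_trans (Finset.card_insert_le _ _) ?_
      have h1 := Finset.card_insert_le b ({c, d} : Finset H)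
      have h2 := Finset.card_insert_le c ({d} : Finset H)
      simp only [Finset.card_singleton] at *
      omega
    have hI := hindep S hc4
    have ha : a ∈ S := by simp [hS]
    have hb : b ∈ S := by simp [hS]
    have hcS : c ∈ S := by simp [hS]
    have hd : d ∈ S := by simp [hS]
    set ia : S := ⟨a, ha⟩
    set ib : S := ⟨b, hb⟩
    set ic : S := ⟨c, hcS⟩
    set idd : S := ⟨d, hd⟩
    have hnm : ia ∉ ({ib, ic, idd} : Finset S) := by
      simp [ia, ib, ic, idd, Subtype.ext_iff, hab, hac, had]
    have hprodI : IndepFun (∏ j ∈ ({ib, ic, idd} : Finset S), g (j : H)) (g a) μ :=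
      hI.indepFun_finset_prod_of_notMem (fun i => hmeas i) hnm
    have hprod : (∏ j ∈ ({ib, ic, idd} : Finset S), (fun j : S => g (j : H)) j) =
        fun ω => g b ω * g c ω * g d ω := by
      rw [Finset.prod_insert (by simp [ib, ic, idd, Subtype.ext_iff, hbc, hbd]),
        Finset.prod_insert (by simp [ic, idd, Subtype.ext_iff, hcd]),
        Finset.prod_singleton]
      funext ω
      simp [ib, ic, idd, mul_assoc]
    rw [hprod] at hprodI
    have hmul := hprodI.integral_mul_eq_mul_integral (hint3 b c d).aestronglyMeasurable (hint1 a).aestronglyMeasurable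
    have heq : ∫ ω, g a ω * g b ω * g c ω * g d ω ∂μ =
        ∫ ω, ((fun ω => g b ω * g c ω * g d ω) * g a) ω ∂μ := by
      apply integral_congr_ae
      filter_upwards with ω
      simp only [Pi.mul_apply]
      ring
    rw [heq, hmul, hEg a, mul_zero]
  -- expectation of the empty product
  have hE0 : ∫ (_ : Ω), (1:ℝ) ∂μ = 1 := by simp
  -- the key fourth moment of a single quadruple
  have key : ∀ j1 j2 j3 j4 : H, ∫ ω, g j1 ω * g j2 ω * g j3 ω * g j4 ω ∂μ =
      (if j1 = j2 then (1:ℝ) else 0) * (if j3 = j4 then (1:ℝ) else 0)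
      + (if j1 = j3 then (1:ℝ) else 0) * (if j2 = j4 then (1:ℝ) else 0)
      + (if j1 = j4 then (1:ℝ) else 0) * (if j2 = j3 then (1:ℝ) else 0)
      - 2 * ((if j1 = j2 then (1:ℝ) else 0) * (if j1 = j3 then (1:ℝ) else 0) *
          (if j1 = j4 then (1:ℝ) else 0)) := by
    intro j1 j2 j3 j4
    by_cases h12 : j1 = j2
    · subst h12
      have hpt : ∀ ω, g j1 ω * g j1 ω * g j3 ω * g j4 ω = g j3 ω * g j4 ω := fun ω => by
        rw [hsq, one_mul]
      rw [integral_congr_ae (Filter.Eventually.of_forall hpt)]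
      by_cases h34 : j3 = j4
      · subst h34
        rw [integral_congr_ae (Filter.Eventually.of_forall (fun ω => hsq j3 ω)), hE0]
        by_cases h13 : j1 = j3 <;> simp [h13] <;> norm_num
      · rw [hE2 _ _ h34]
        by_cases h13 : j1 = j3 <;> by_cases h14 : j1 = j4 <;>
          simp_all <;> norm_num
    · by_cases h13 : j1 = j3
      · subst h13
        have hpt : ∀ ω, g j1 ω * g j2 ω * g j1 ω * g j4 ω = g j2 ω * g j4 ω := fun ω => by
          rw [show g j1 ω * g j2 ω * g j1 ω * g j4 ω =
            (g j1 ω * g j1 ω) * (g j2 ω * g j4 ω) by ring, hsq, one_mul]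
        rw [integral_congr_ae (Filter.Eventually.of_forall hpt)]
        by_cases h24 : j2 = j4
        · subst h24
          rw [integral_congr_ae (Filter.Eventually.of_forall (fun ω => hsq j2 ω)), hE0]
          simp_all <;> norm_num
        · rw [hE2 _ _ h24]
          by_cases h14 : j1 = j4 <;> by_cases h23 : j2 = j1 <;>
            simp_all <;> norm_num
      · by_cases h14 : j1 = j4
        · subst h14
          have hpt : ∀ ω, g j1 ω * g j2 ω * g j3 ω * g j1 ω = g j2 ω * g j3 ω := fun ω => by
            rw [show g j1 ω * g j2 ω * g j3 ω * g j1 ω =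
              (g j1 ω * g j1 ω) * (g j2 ω * g j3 ω) by ring, hsq, one_mul]
          rw [integral_congr_ae (Filter.Eventually.of_forall hpt)]
          by_cases h23 : j2 = j3
          · subst h23
            rw [integral_congr_ae (Filter.Eventually.of_forall (fun ω => hsq j2 ω)), hE0]
            simp_all <;> norm_num
          · rw [hE2 _ _ h23]
            simp_all <;> norm_num
        · -- j1 distinct from j2, j3, j4; RHS is 0
          have hrhs : (if j1 = j2 then (1:ℝ) else 0) * (if j3 = j4 then (1:ℝ) else 0)
              + (if j1 = j3 then (1:ℝ) else 0) * (if j2 = j4 then (1:ℝ) else 0)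
              + (if j1 = j4 then (1:ℝ) else 0) * (if j2 = j3 then (1:ℝ) else 0)
              - 2 * ((if j1 = j2 then (1:ℝ) else 0) * (if j1 = j3 then (1:ℝ) else 0) *
                  (if j1 = j4 then (1:ℝ) else 0)) = 0 := by
            simp [h12, h13, h14]
          rw [hrhs]
          by_cases h23 : j2 = j3
          · subst h23
            have hpt : ∀ ω, g j1 ω * g j2 ω * g j2 ω * g j4 ω = g j1 ω * g j4 ω := fun ω => by
              rw [show g j1 ω * g j2 ω * g j2 ω * g j4 ω =
                (g j2 ω * g j2 ω) * (g j1 ω * g j4 ω) by ring, hsq, one_mul]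
            rw [integral_congr_ae (Filter.Eventually.of_forall hpt)]
            exact hE2 _ _ h14
          · by_cases h24 : j2 = j4
            · subst h24
              have hpt : ∀ ω, g j1 ω * g j2 ω * g j3 ω * g j2 ω = g j1 ω * g j3 ω := fun ω => by
                rw [show g j1 ω * g j2 ω * g j3 ω * g j2 ω =
                  (g j2 ω * g j2 ω) * (g j1 ω * g j3 ω) by ring, hsq, one_mul]
              rw [integral_congr_ae (Filter.Eventually.of_forall hpt)]
              exact hE2 _ _ h13
            · by_cases h34 : j3 = j4
              · subst h34
                have hpt : ∀ ω, g j1 ω * g j2 ω * g j3 ω * g j3 ω = g j1 ω * g j2 ω := fun ω => by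
                  rw [show g j1 ω * g j2 ω * g j3 ω * g j3 ω =
                    (g j3 ω * g j3 ω) * (g j1 ω * g j2 ω) by ring, hsq, one_mul]
                rw [integral_congr_ae (Filter.Eventually.of_forall hpt)]
                exact hE2 _ _ h12
              · exact hE4 _ _ _ _ h12 h13 h14 h23 h24 h34
  -- expand the fourth power
  have expand : ∀ ω, (∑ j, F j * g j ω) ^ 4 =
      ∑ j1, ∑ j2, ∑ j3, ∑ j4,
        (F j1 * F j2 * F j3 * F j4) * (g j1 ω * g j2 ω * g j3 ω * g j4 ω) := by
    intro ω
    symm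
    calc ∑ j1, ∑ j2, ∑ j3, ∑ j4,
          (F j1 * F j2 * F j3 * F j4) * (g j1 ω * g j2 ω * g j3 ω * g j4 ω)
        = ∑ j1, ∑ j2, ∑ j3, ∑ j4,
          (F j1 * g j1 ω) * (F j2 * g j2 ω) * (F j3 * g j3 ω) * (F j4 * g j4 ω) := by
          refine Finset.sum_congr rfl fun j1 _ => Finset.sum_congr rfl fun j2 _ =>
            Finset.sum_congr rfl fun j3 _ => Finset.sum_congr rfl fun j4 _ => by ring
      _ = (∑ j, F j * g j ω) ^ 4 := by
          simp only [← Finset.sum_mul, ← Finset.mul_sum]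
          ring
  rw [integral_congr_ae (Filter.Eventually.of_forall expand)]
  -- swap integral and sums
  have hintegr4 : ∀ j1 j2 j3 j4 : H, Integrable (fun ω =>
      (F j1 * F j2 * F j3 * F j4) * (g j1 ω * g j2 ω * g j3 ω * g j4 ω)) μ :=
    fun j1 j2 j3 j4 => (hint4 j1 j2 j3 j4).const_mul _
  rw [integral_finset_sum _ (fun j1 _ => integrable_finset_sum _ (fun j2 _ =>
    integrable_finset_sum _ (fun j3 _ => integrable_finset_sum _ (fun j4 _ =>
      hintegr4 j1 j2 j3 j4))))]
  have swap : ∀ j1 : H, (∫ ω, ∑ j2, ∑ j3, ∑ j4,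
      (F j1 * F j2 * F j3 * F j4) * (g j1 ω * g j2 ω * g j3 ω * g j4 ω) ∂μ) =
      ∑ j2, ∑ j3, ∑ j4, (F j1 * F j2 * F j3 * F j4) *
        ∫ ω, g j1 ω * g j2 ω * g j3 ω * g j4 ω ∂μ := by
    intro j1
    rw [integral_finset_sum _ (fun j2 _ => integrable_finset_sum _ (fun j3 _ =>
      integrable_finset_sum _ (fun j4 _ => hintegr4 j1 j2 j3 j4)))]
    refine Finset.sum_congr rfl fun j2 _ => ?_
    rw [integral_finset_sum _ (fun j3 _ => integrable_finset_sum _ (fun j4 _ =>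
      hintegr4 j1 j2 j3 j4))]
    refine Finset.sum_congr rfl fun j3 _ => ?_
    rw [integral_finset_sum _ (fun j4 _ => hintegr4 j1 j2 j3 j4)]
    refine Finset.sum_congr rfl fun j4 _ => ?_
    exact integral_const_mul _ _
  simp only [swap, key]
  -- final combinatorial identity
  have hsq2 : (∑ j, (F j)^2)^2 = ∑ j1, ∑ j2, F j1^2 * F j2^2 := by
    rw [sq, Finset.sum_mul_sum]
  simp only [mul_add, mul_sub, Finset.sum_add_distrib, Finset.sum_sub_distrib,
    mul_ite, ite_mul, mul_zero, zero_mul, mul_one, one_mul,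
    Finset.sum_ite_eq, Finset.sum_ite_eq', Finset.mem_univ, if_true,
    Finset.sum_ite_irrel, Finset.sum_const_zero]
  rw [hsq2]
  ring_nf
  rw [← Finset.sum_mul]
end

section
/- Let $(\Omega,\mathcal{F},\mathbb{P})$ be a probability space, $H$ a nonempty finite index set, and $F : H \to \mathbb{R}$ a fixed vector. Let $(g_j)_{j \in H}$ be real-valued random variables on $\Omega$ such that each $g_j$ takes values in $\{-1,1\}$ with $\mathbb{P}(g_j = 1) = \mathbb{P}(g_j = -1) = 1/2$, and such that the family $(g_j)_{j\in H}$ is $4$-wise independent, i.e. for every subset $S \subseteq H$ with $|S| \le 4$ the variables $(g_j)_{j \in S}$ are mutually independent. Define $X = \sum_{j\in H} F(j)\, g_j$ and $F_2 = \sum_{j\in H} F(j)^2$. Then $\operatorname{Var}(X^2) = \mathbb{E}[X^4] - (\mathbb{E}[X^2])^2 \le 2 F_2^2$. -/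
open MeasureTheory ProbabilityTheory

lemma ams_aux_integral_prod {Ω : Type*} [MeasurableSpace Ω] (μ : Measure Ω)
    [IsProbabilityMeasure μ] {ι : Type*} (f : ι → Ω → ℝ)
    (hind : iIndepFun f μ)
    (hm : ∀ i, Measurable (f i)) (hb : ∀ i ω, |f i ω| ≤ 1) (s : Finset ι) :
    ∫ ω, ∏ i ∈ s, f i ω ∂μ = ∏ i ∈ s, ∫ ω, f i ω ∂μ := by
  classical
  have hintf : ∀ i, Integrable (f i) μ := fun i =>
    Integrable.mono' (integrable_const 1) (hm i).aestronglyMeasurable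
      (Filter.Eventually.of_forall fun ω => by simpa using hb i ω)
  induction s using Finset.induction_on with
  | empty => simp
  | @insert a s ha ih =>
    have hprodm : Measurable (∏ i ∈ s, f i) := by
      rw [Finset.prod_fn]
      exact Finset.measurable_prod s (fun i (_ : i ∈ s) => hm i)
    have hprodb : ∀ ω, |(∏ i ∈ s, f i) ω| ≤ 1 := by
      intro ω
      rw [Finset.prod_apply, Finset.abs_prod]
      exact Finset.prod_le_one (fun i _ => abs_nonneg _) (fun i _ => hb i ω)
    have hprodint : Integrable (∏ i ∈ s, f i) μ :=
      Integrable.mono' (integrable_const 1) hprodm.aestronglyMeasurable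
        (Filter.Eventually.of_forall fun ω => by
          simpa [Finset.prod_apply, Finset.abs_prod] using hprodb ω)
    have hIF : IndepFun (f a) (∏ i ∈ s, f i) μ :=
      (hind.indepFun_finsetProd_of_notMem hm ha).symm
    have key : ∫ ω, (f a * ∏ i ∈ s, f i) ω ∂μ = (∫ ω, f a ω ∂μ) * ∫ ω, (∏ i ∈ s, f i) ω ∂μ :=
      hIF.integral_mul_eq_mul_integral (hintf a).aestronglyMeasurable hprodint.aestronglyMeasurable
    rw [show (∫ ω, ∏ i ∈ insert a s, f i ω ∂μ) = ∫ ω, f a ω * ∏ i ∈ s, f i ω ∂μ by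
      congr 1; funext ω; rw [Finset.prod_insert ha], Finset.prod_insert ha]
    calc ∫ ω, f a ω * ∏ i ∈ s, f i ω ∂μ
        = ∫ ω, (f a * ∏ i ∈ s, f i) ω ∂μ := by
          congr 1; funext ω; simp [Finset.prod_apply]
      _ = (∫ ω, f a ω ∂μ) * ∫ ω, (∏ i ∈ s, f i) ω ∂μ := key
      _ = (∫ ω, f a ω ∂μ) * ∏ i ∈ s, ∫ ω, f i ω ∂μ := by
          rw [← ih]; congr 1; congr 1; funext ω; simp [Finset.prod_apply]

/-- **Lemma 2 (variance bound for the AMS sketch).** If `(g j)` are 4-wise independent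
Rademacher random variables and `X = ∑ j, F j * g j`, `F₂ = ∑ j, F j ^ 2`, then
`Var(X²) = E[X⁴] - (E[X²])² ≤ 2 F₂²`. -/
theorem ams_sketch_variance_bound
    {Ω : Type*} [MeasurableSpace Ω] (μ : Measure Ω) [IsProbabilityMeasure μ]
    {H : Type*} [Fintype H] [Nonempty H] (F : H → ℝ) (g : H → Ω → ℝ)
    (hmeas : ∀ j, Measurable (g j))
    (hval : ∀ j ω, g j ω = 1 ∨ g j ω = -1)
    (hp1 : ∀ j, μ {ω | g j ω = 1} = 1 / 2)
    (hpm1 : ∀ j, μ {ω | g j ω = -1} = 1 / 2)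
    (hindep : ∀ S : Finset H, S.card ≤ 4 →
      iIndepFun
        (fun j : S => g (j : H)) μ) :
    variance (fun ω => (∑ j, F j * g j ω) ^ 2) μ =
        ∫ ω, (∑ j, F j * g j ω) ^ 4 ∂μ - (∫ ω, (∑ j, F j * g j ω) ^ 2 ∂μ) ^ 2 ∧
      variance (fun ω => (∑ j, F j * g j ω) ^ 2) μ ≤ 2 * (∑ j, (F j) ^ 2) ^ 2 := by
  classical
  have hsq : ∀ j ω, g j ω * g j ω = 1 := by
    intro j ω; rcases hval j ω with h | h <;> rw [h] <;> norm_num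
  have habs : ∀ j ω, |g j ω| ≤ 1 := by
    intro j ω; rcases hval j ω with h | h <;> rw [h] <;> norm_num
  -- expectation of a single g j is 0
  have hEg : ∀ j, ∫ ω, g j ω ∂μ = 0 := by
    intro j
    have hset : MeasurableSet {ω | g j ω = 1} := hmeas j (measurableSet_singleton 1)
    have heq : (fun ω => g j ω)
        = fun ω => Set.indicator {ω | g j ω = 1} (fun _ => (2 : ℝ)) ω - 1 := by
      funext ω
      rcases hval j ω with h | h
      · rw [h, Set.indicator_of_mem (by exact h)]; norm_num
      · rw [h, Set.indicator_of_notMem (by norm_num [Set.mem_setOf_eq, h])]; norm_num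
    rw [heq, integral_sub (Integrable.indicator (integrable_const 2) hset) (integrable_const 1)]
    rw [integral_indicator_const _ hset, measureReal_def, hp1 j]
    simp
  -- key: integral of products over a small finset is 0
  have hprod0 : ∀ S : Finset H, S.Nonempty → S.card ≤ 4 →
      ∫ ω, ∏ i ∈ S, g i ω ∂μ = 0 := by
    intro S hSne hScard
    have hind := hindep S hScard
    have := ams_aux_integral_prod μ (fun j : S => g (j : H)) hind
      (fun i => hmeas i) (fun i ω => habs i ω) Finset.univ
    have hL : ∫ ω, ∏ i : S, g (i : H) ω ∂μ = ∫ ω, ∏ i ∈ S, g i ω ∂μ := by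
      congr 1; funext ω; exact Finset.prod_coe_sort S (fun i => g i ω)
    have hR : (∏ i : S, ∫ ω, g (i : H) ω ∂μ) = 0 := by
      obtain ⟨a, ha⟩ := hSne
      apply Finset.prod_eq_zero (Finset.mem_univ (⟨a, ha⟩ : S))
      exact hEg a
    rw [hL, hR] at this
    exact this
  -- pair expectations
  have hA : ∀ i j : H, i ≠ j → ∫ ω, g i ω * g j ω ∂μ = 0 := by
    intro i j hij
    have h := hprod0 {i, j} ⟨i, by simp⟩ (le_trans (Finset.card_insert_le _ _) (by simp))
    rw [show (∫ ω, ∏ x ∈ ({i, j} : Finset H), g x ω ∂μ) = ∫ ω, g i ω * g j ω ∂μ by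
      congr 1; funext ω; rw [Finset.prod_insert (by simp [hij]), Finset.prod_singleton]] at h
    exact h
  have hB : ∀ i j k l : H, i ≠ j → i ≠ k → i ≠ l → j ≠ k → j ≠ l → k ≠ l →
      ∫ ω, g i ω * g j ω * g k ω * g l ω ∂μ = 0 := by
    intro i j k l hij hik hil hjk hjl hkl
    have h := hprod0 {i, j, k, l} ⟨i, by simp⟩
      (le_trans (Finset.card_insert_le _ _) (by
        have := Finset.card_insert_le j ({k, l} : Finset H)
        have h2 := Finset.card_insert_le k ({l} : Finset H)
        simp only [Finset.card_singleton] at *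
        omega))
    rw [show (∫ ω, ∏ x ∈ ({i, j, k, l} : Finset H), g x ω ∂μ)
        = ∫ ω, g i ω * g j ω * g k ω * g l ω ∂μ by
      congr 1; funext ω
      rw [Finset.prod_insert (by simp [hij, hik, hil]),
        Finset.prod_insert (by simp [hjk, hjl]),
        Finset.prod_insert (by simp [hkl]), Finset.prod_singleton]
      ring] at h
    exact h
  have hone : ∫ ω, (1 : ℝ) ∂μ = 1 := by simp
  -- fourth-moment expectations
  have hE4 : ∀ i j k l : H, ∫ ω, g i ω * g j ω * g k ω * g l ω ∂μ =
      (if i = j then (1:ℝ) else 0) * (if k = l then 1 else 0)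
      + (if i = k then (1:ℝ) else 0) * (if j = l then 1 else 0)
      + (if i = l then (1:ℝ) else 0) * (if j = k then 1 else 0)
      - 2 * ((if i = j then (1:ℝ) else 0) * (if j = k then 1 else 0)
          * (if k = l then 1 else 0)) := by
    intro i j k l
    by_cases hij : i = j
    · subst hij
      by_cases hkl : k = l
      · subst hkl
        by_cases hik : i = k
        · subst hik
          rw [show (fun ω => g i ω * g i ω * g i ω * g i ω) = fun ω => (1:ℝ) from
            funext fun ω => by
              linear_combination (g i ω * g i ω) * hsq i ω + hsq i ω]
          simp [hone]
          norm_num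
        · rw [show (fun ω => g i ω * g i ω * g k ω * g k ω) = fun ω => (1:ℝ) from
            funext fun ω => by
              linear_combination (g k ω * g k ω) * hsq i ω + hsq k ω]
          simp [hone, hik]
      · -- i = j, k ≠ l : integral of g k * g l
        rw [show (fun ω => g i ω * g i ω * g k ω * g l ω) = fun ω => g k ω * g l ω from
          funext fun ω => by linear_combination (g k ω * g l ω) * hsq i ω]
        rw [hA k l hkl]
        by_cases hik : i = k
        · have hil : i ≠ l := fun h => hkl (hik ▸ h)
          simp [hkl, hik, hil]
        · have hlk : l ≠ k := fun h => hkl h.symm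
          by_cases hil : i = l <;> simp [hkl, hik, hil, hlk]
    · by_cases hik : i = k
      · subst hik
        by_cases hjl : j = l
        · subst hjl
          rw [show (fun ω => g i ω * g j ω * g i ω * g j ω) = fun ω => (1:ℝ) from
            funext fun ω => by
              linear_combination (g j ω * g j ω) * hsq i ω + hsq j ω]
          have hil : i ≠ j := hij
          simp [hij, hone, Ne.symm hij]
        · rw [show (fun ω => g i ω * g j ω * g i ω * g l ω) = fun ω => g j ω * g l ω from
            funext fun ω => by linear_combination (g j ω * g l ω) * hsq i ω]
          rw [hA j l hjl]
          by_cases hil : i = l <;> by_cases hjk : j = i <;> simp_all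
      · by_cases hil : i = l
        · subst hil
          by_cases hjk : j = k
          · subst hjk
            rw [show (fun ω => g i ω * g j ω * g j ω * g i ω) = fun ω => (1:ℝ) from
              funext fun ω => by
                linear_combination (g j ω * g j ω) * hsq i ω + hsq j ω]
            simp [hij, hik, hone, Ne.symm hij, Ne.symm hik]
          · rw [show (fun ω => g i ω * g j ω * g k ω * g i ω) = fun ω => g j ω * g k ω from
              funext fun ω => by linear_combination (g j ω * g k ω) * hsq i ω]
            rw [hA j k hjk]
            simp [hij, hik, hjk]
        · by_cases hjk : j = k
          · subst hjk
            rw [show (fun ω => g i ω * g j ω * g j ω * g l ω) = fun ω => g i ω * g l ω from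
              funext fun ω => by linear_combination (g i ω * g l ω) * hsq j ω]
            rw [hA i l hil]
            by_cases hjl : j = l <;> simp [hij, hik, hil, hjl]
          · by_cases hjl : j = l
            · subst hjl
              rw [show (fun ω => g i ω * g j ω * g k ω * g j ω) = fun ω => g i ω * g k ω from
                funext fun ω => by linear_combination (g i ω * g k ω) * hsq j ω]
              rw [hA i k hik]
              simp [hij, hik, hil, hjk]
            · by_cases hkl : k = l
              · subst hkl
                rw [show (fun ω => g i ω * g j ω * g k ω * g k ω) = fun ω => g i ω * g j ω from
                  funext fun ω => by linear_combination (g i ω * g j ω) * hsq k ω]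
                rw [hA i j hij]
                simp [hij, hik, hil, hjk, hjl]
              · rw [hB i j k l hij hik hil hjk hjl hkl]
                simp [hij, hik, hil, hjk, hjl, hkl]
  have hE2 : ∀ i j : H, ∫ ω, g i ω * g j ω ∂μ = if i = j then (1:ℝ) else 0 := by
    intro i j
    by_cases h : i = j
    · subst h
      rw [show (fun ω => g i ω * g i ω) = fun ω => (1:ℝ) from funext fun ω => hsq i ω]
      simp [hone]
    · rw [hA i j h]; simp [h]
  -- integrability of the summand products
  have hint2 : ∀ i j : H, Integrable (fun ω => F i * F j * (g i ω * g j ω)) μ := by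
    intro i j
    refine Integrable.mono' (integrable_const (|F i * F j|))
      (((( hmeas i).mul (hmeas j)).const_mul _).aestronglyMeasurable)
      (Filter.Eventually.of_forall fun ω => ?_)
    rw [Real.norm_eq_abs, abs_mul]
    have h1 : |g i ω * g j ω| ≤ 1 := by
      rw [abs_mul]; exact mul_le_one₀ (habs i ω) (abs_nonneg _) (habs j ω)
    calc |F i * F j| * |g i ω * g j ω| ≤ |F i * F j| * 1 :=
          mul_le_mul_of_nonneg_left h1 (abs_nonneg _)
      _ = |F i * F j| := mul_one _
  have hint4 : ∀ i j k l : H,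
      Integrable (fun ω => F i * F j * F k * F l * (g i ω * g j ω * g k ω * g l ω)) μ := by
    intro i j k l
    refine Integrable.mono' (integrable_const (|F i * F j * F k * F l|))
      ((((((hmeas i).mul (hmeas j)).mul (hmeas k)).mul (hmeas l)).const_mul _).aestronglyMeasurable)
      (Filter.Eventually.of_forall fun ω => ?_)
    rw [Real.norm_eq_abs, abs_mul]
    have h1 : |g i ω * g j ω * g k ω * g l ω| ≤ 1 := by
      rw [abs_mul, abs_mul, abs_mul]
      exact mul_le_one₀ (mul_le_one₀ (mul_le_one₀ (habs i ω) (abs_nonneg _) (habs j ω))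
        (abs_nonneg _) (habs k ω)) (abs_nonneg _) (habs l ω)
    calc |F i * F j * F k * F l| * |g i ω * g j ω * g k ω * g l ω|
        ≤ |F i * F j * F k * F l| * 1 := by
          exact mul_le_mul_of_nonneg_left h1 (abs_nonneg _)
      _ = |F i * F j * F k * F l| := mul_one _
  -- second moment
  have hexp2 : ∀ ω, (∑ j, F j * g j ω) ^ 2
      = ∑ i, ∑ j, F i * F j * (g i ω * g j ω) := by
    intro ω
    rw [sq, Finset.sum_mul_sum]
    exact Finset.sum_congr rfl fun i _ => Finset.sum_congr rfl fun j _ => by ring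
  have hEX2 : ∫ ω, (∑ j, F j * g j ω) ^ 2 ∂μ = ∑ j, F j ^ 2 := by
    calc ∫ ω, (∑ j, F j * g j ω) ^ 2 ∂μ
        = ∫ ω, ∑ i, ∑ j, F i * F j * (g i ω * g j ω) ∂μ := by simp only [hexp2]
      _ = ∑ i, ∑ j, F i * F j * ∫ ω, g i ω * g j ω ∂μ := by
          rw [integral_finset_sum _ fun i _ => integrable_finset_sum _ fun j _ => hint2 i j]
          refine Finset.sum_congr rfl fun i _ => ?_
          rw [integral_finset_sum _ fun j _ => hint2 i j]
          exact Finset.sum_congr rfl fun j _ => integral_const_mul _ _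
      _ = ∑ j, F j ^ 2 := by
          simp [hE2, mul_ite, Finset.sum_ite_eq, sq]
  -- fourth moment
  have hexp4 : ∀ ω, (∑ j, F j * g j ω) ^ 4
      = ∑ i, ∑ k, ∑ j, ∑ l, F i * F j * F k * F l * (g i ω * g j ω * g k ω * g l ω) := by
    intro ω
    have h4 : (∑ j, F j * g j ω) ^ 4
        = ((∑ j, F j * g j ω) ^ 2) * ((∑ j, F j * g j ω) ^ 2) := by ring
    rw [h4, hexp2 ω, Finset.sum_mul_sum]
    refine Finset.sum_congr rfl fun i _ => Finset.sum_congr rfl fun k _ => ?_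
    rw [Finset.sum_mul_sum]
    exact Finset.sum_congr rfl fun j _ => Finset.sum_congr rfl fun l _ => by ring
  have hEX4 : ∫ ω, (∑ j, F j * g j ω) ^ 4 ∂μ
      = 3 * (∑ j, F j ^ 2) ^ 2 - 2 * ∑ j, F j ^ 4 := by
    calc ∫ ω, (∑ j, F j * g j ω) ^ 4 ∂μ
        = ∫ ω, ∑ i, ∑ k, ∑ j, ∑ l,
            F i * F j * F k * F l * (g i ω * g j ω * g k ω * g l ω) ∂μ := by
          simp only [hexp4]
      _ = ∑ i, ∑ k, ∑ j, ∑ l,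
            F i * F j * F k * F l * ∫ ω, g i ω * g j ω * g k ω * g l ω ∂μ := by
          rw [integral_finset_sum _ fun i _ => integrable_finset_sum _ fun k _ =>
            integrable_finset_sum _ fun j _ => integrable_finset_sum _ fun l _ => hint4 i j k l]
          refine Finset.sum_congr rfl fun i _ => ?_
          rw [integral_finset_sum _ fun k _ =>
            integrable_finset_sum _ fun j _ => integrable_finset_sum _ fun l _ => hint4 i j k l]
          refine Finset.sum_congr rfl fun k _ => ?_
          rw [integral_finset_sum _ fun j _ => integrable_finset_sum _ fun l _ => hint4 i j k l]
          refine Finset.sum_congr rfl fun j _ => ?_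
          rw [integral_finset_sum _ fun l _ => hint4 i j k l]
          exact Finset.sum_congr rfl fun l _ => integral_const_mul _ _
      _ = 3 * (∑ j, F j ^ 2) ^ 2 - 2 * ∑ j, F j ^ 4 := by
          simp only [hE4]
          rw [show (3 : ℝ) * (∑ j, F j ^ 2) ^ 2 - 2 * ∑ j, F j ^ 4
            = 3 * (∑ i, ∑ k, F i ^ 2 * F k ^ 2) - 2 * ∑ j, F j ^ 4 by
              rw [sq, Finset.sum_mul_sum]]
          simp [mul_add, mul_sub, Finset.sum_add_distrib, Finset.sum_sub_distrib,
            mul_ite, ite_mul, Finset.sum_ite_eq, Finset.sum_ite_eq', Finset.mul_sum,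
            Finset.sum_mul]
          have hS : ∀ G : H → H → ℝ, (∀ x y, G x y = F x ^ 2 * F y ^ 2) →
              (∑ x : H, ∑ y : H, G x y) = ∑ x : H, ∑ y : H, F x ^ 2 * F y ^ 2 :=
            fun G hG => Finset.sum_congr rfl fun x _ => Finset.sum_congr rfl fun y _ => hG x y
          rw [show (∑ x : H, ∑ y : H, F x * F x * F y * F y)
              = ∑ x : H, ∑ y : H, F x ^ 2 * F y ^ 2 from hS _ fun x y => by ring]
          rw [show (∑ x : H, ∑ y : H, F x * F y * F x * F y)
              = ∑ x : H, ∑ y : H, F x ^ 2 * F y ^ 2 from hS _ fun x y => by ring]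
          rw [show (∑ x : H, ∑ y : H, F x * F y * F y * F x)
              = ∑ x : H, ∑ y : H, F x ^ 2 * F y ^ 2 from hS _ fun x y => by ring]
          rw [show (∑ x : H, F x * F x * F x * F x * 2) = 2 * ∑ x : H, F x ^ 4 from by
            rw [Finset.mul_sum]; exact Finset.sum_congr rfl fun x _ => by ring]
          rw [show (∑ x : H, ∑ y : H, (3:ℝ) * (F x ^ 2 * F y ^ 2))
              = 3 * ∑ x : H, ∑ y : H, F x ^ 2 * F y ^ 2 from by
            rw [Finset.mul_sum]
            exact Finset.sum_congr rfl fun x _ => (Finset.mul_sum _ _ _).symm]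
          rw [show (∑ x : H, (2:ℝ) * F x ^ 4) = 2 * ∑ x : H, F x ^ 4 from
            (Finset.mul_sum _ _ _).symm]
          ring
  -- boundedness and Memℒp
  have hXm : Measurable fun ω => ∑ j, F j * g j ω :=
    Finset.measurable_sum Finset.univ (fun j _ => (hmeas j).const_mul (F j))
  have hXb : ∀ ω, |∑ j, F j * g j ω| ≤ ∑ j, |F j| := by
    intro ω
    calc |∑ j, F j * g j ω| ≤ ∑ j, |F j * g j ω| := Finset.abs_sum_le_sum_abs _ _
      _ ≤ ∑ j, |F j| := Finset.sum_le_sum fun j _ => by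
          rw [abs_mul]; exact mul_le_of_le_one_right (abs_nonneg _) (habs j ω)
  have hmem : MemLp (fun ω => (∑ j, F j * g j ω) ^ 2) 2 μ := by
    refine MemLp.of_bound ((hXm.pow_const 2).aestronglyMeasurable) ((∑ j, |F j|) ^ 2)
      (Filter.Eventually.of_forall fun ω => ?_)
    rw [Real.norm_eq_abs, abs_pow]
    exact pow_le_pow_left₀ (abs_nonneg _) (hXb ω) 2
  have hvar : variance (fun ω => (∑ j, F j * g j ω) ^ 2) μ
      = ∫ ω, (∑ j, F j * g j ω) ^ 4 ∂μ - (∫ ω, (∑ j, F j * g j ω) ^ 2 ∂μ) ^ 2 := by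
    rw [variance_eq_sub hmem]
    congr 1
    · congr 1
      funext ω
      simp only [Pi.pow_apply]
      ring
  refine ⟨hvar, ?_⟩
  rw [hvar, hEX4, hEX2]
  have h4 : (0:ℝ) ≤ ∑ j, F j ^ 4 := Finset.sum_nonneg fun j _ => by positivity
  nlinarith [h4]
end
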